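/- Let U(θ) = exp(−i θ P / 2) where P is a Hermitian involution (P² = I). Then for any Hermitian matrix H and any state vector ψ, the expectation value E(θ) = ⟨ψ| U(θ)† H U(θ) |ψ⟩ satisfies dE/dθ = (1/2)(E(θ + π/2) − E(θ − π/2)). -/

import Mathlib

open Matrix Real

private lemma expand_E {n : ℕ} (P H : Matrix (Fin n) (Fin n) ℂ)
    (hP : P.IsHermitian) (ψ : Fin n → ℂ) (θ : ℝ) :
    ∀ U : Matrix (Fin n) (Fin n) ℂ,
    U = (Real.cos (θ / 2) : ℂ) • (1 : Matrix (Fin n) (Fin n) ℂ)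
        - (Complex.I * (Real.sin (θ / 2) : ℂ)) • P →
    star ψ ⬝ᵥ ((Uᴴ * H * U).mulVec ψ)
    = (Real.cos (θ/2) : ℂ)^2 * (star ψ ⬝ᵥ H.mulVec ψ)
      + (Real.sin (θ/2) : ℂ)^2 * (star ψ ⬝ᵥ (P*H*P).mulVec ψ)
      + Complex.I * (Real.sin (θ/2) : ℂ) * (Real.cos (θ/2) : ℂ) *
        ((star ψ ⬝ᵥ (P*H).mulVec ψ) - (star ψ ⬝ᵥ (H*P).mulVec ψ)) := by
  rintro U rfl
  simp only [conjTranspose_sub, conjTranspose_smul, conjTranspose_one, hP.eq,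
    star_mul', Complex.star_def, Complex.conj_I, Complex.conj_ofReal,
    sub_mul, mul_sub, smul_mul_assoc, Matrix.mul_smul, one_mul, mul_one,
    Matrix.sub_mulVec, Matrix.smul_mulVec, dotProduct_sub, dotProduct_smul,
    smul_eq_mul, smul_smul, Matrix.mul_assoc]
  ring_nf
  rw [Complex.I_sq]
  ring

private lemma trig_form (A B C : ℂ) (θ : ℝ) :
    (Real.cos (θ/2) : ℂ)^2 * A + (Real.sin (θ/2) : ℂ)^2 * B
      + ((Real.sin (θ/2) : ℂ) * (Real.cos (θ/2) : ℂ)) * C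
    = (A + B)/2 + (Real.cos θ : ℂ) * ((A - B)/2) + (Real.sin θ : ℂ) * (C/2) := by
  have hc : (Real.cos (θ/2))^2 = 1/2 + Real.cos θ / 2 := by
    have := Real.cos_sq (θ/2); rwa [show 2 * (θ/2) = θ by ring] at this
  have hs : (Real.sin (θ/2))^2 = 1/2 - Real.cos θ / 2 := by
    have := Real.sin_sq (θ/2); rw [this, Real.cos_sq (θ/2)]; ring
  have hsc : Real.sin (θ/2) * Real.cos (θ/2) = Real.sin θ / 2 := by
    have := Real.sin_two_mul (θ/2)
    rw [show 2 * (θ/2) = θ by ring] at this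
    linarith
  rw [show ((Real.cos (θ/2) : ℂ))^2 = ((Real.cos (θ/2))^2 : ℝ) by push_cast; ring,
      show ((Real.sin (θ/2) : ℂ))^2 = ((Real.sin (θ/2))^2 : ℝ) by push_cast; ring,
      show ((Real.sin (θ/2) : ℂ) * (Real.cos (θ/2) : ℂ))
        = ((Real.sin (θ/2) * Real.cos (θ/2) : ℝ) : ℂ) by push_cast; ring,
      hc, hs, hsc]
  push_cast
  ring

private lemma deriv_form (A B C : ℂ) (θ : ℝ) :
    HasDerivAt (fun t : ℝ => A + (Real.cos t : ℂ) * B + (Real.sin t : ℂ) * C)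
      (-(Real.sin θ : ℂ) * B + (Real.cos θ : ℂ) * C) θ := by
  have hc : HasDerivAt (fun t : ℝ => ((Real.cos t : ℝ) : ℂ)) (-(Real.sin θ : ℂ)) θ := by
    simpa using (Real.hasDerivAt_cos θ).ofReal_comp
  have hs : HasDerivAt (fun t : ℝ => ((Real.sin t : ℝ) : ℂ)) ((Real.cos θ : ℂ)) θ := by
    simpa using (Real.hasDerivAt_sin θ).ofReal_comp
  simpa [Pi.add_def] using ((hc.mul_const B).const_add A).add (hs.mul_const C)

/-- Parameter shift rule for E(θ) = ⟨ψ|U(θ)† H U(θ)|ψ⟩ with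
U(θ) = cos(θ/2)·I − i sin(θ/2)·P, P Hermitian with P² = I, H Hermitian. -/
theorem parameter_shift_rule_expectation
    {n : ℕ} (P H : Matrix (Fin n) (Fin n) ℂ)
    (hP : P.IsHermitian) (hP2 : P * P = 1) (hH : H.IsHermitian)
    (ψ : Fin n → ℂ) :
    let U : ℝ → Matrix (Fin n) (Fin n) ℂ := fun θ =>
      (Real.cos (θ / 2) : ℂ) • (1 : Matrix (Fin n) (Fin n) ℂ)
        - (Complex.I * (Real.sin (θ / 2) : ℂ)) • P
    let E : ℝ → ℂ := fun θ => star ψ ⬝ᵥ (((U θ)ᴴ * H * U θ).mulVec ψ)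
    ∀ θ : ℝ, HasDerivAt E ((1 / 2 : ℂ) * (E (θ + π / 2) - E (θ - π / 2))) θ := by
  intro U E θ
  set a : ℂ := star ψ ⬝ᵥ H.mulVec ψ with ha
  set b : ℂ := star ψ ⬝ᵥ (P*H*P).mulVec ψ with hb
  set c : ℂ := Complex.I * ((star ψ ⬝ᵥ (P*H).mulVec ψ) - (star ψ ⬝ᵥ (H*P).mulVec ψ)) with hc
  have hE : ∀ t : ℝ, E t = (a + b)/2 + (Real.cos t : ℂ) * ((a - b)/2)
      + (Real.sin t : ℂ) * (c/2) := by
    intro t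
    have := expand_E P H hP ψ t (U t) rfl
    show star ψ ⬝ᵥ (((U t)ᴴ * H * U t).mulVec ψ) = _
    rw [this, ← trig_form a b c t]
    ring
  have hD := deriv_form ((a+b)/2) ((a-b)/2) (c/2) θ
  have hEfun : E = fun t : ℝ => (a + b)/2 + (Real.cos t : ℂ) * ((a - b)/2)
      + (Real.sin t : ℂ) * (c/2) := funext hE
  rw [hEfun]
  convert hD using 1
  simp only []
  rw [Real.cos_add, Real.sin_add, Real.cos_sub, Real.sin_sub,
    Real.cos_pi_div_two, Real.sin_pi_div_two]
  push_cast
  ring
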